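/- Let X, Y be Banach spaces and M = [[A,B],[C,D]] a bounded operator on X ⊕ Y, where A and D have group inverses. If CA^π = 0, BD^π = 0, A^π BC = 0, BCA = 0, and DC = CA^#BC, then M has a group inverse. -/
import Mathlib


/-- `x` is a group inverse of `a`. -/
def IsGroupInv {R : Type*} [Ring R] (a x : R) : Prop :=
  x * a * x = x ∧ a * x = x * a ∧ a * x * a = a

/-- Auxiliary: the 2×2 block operator on `X × Y`. -/
noncomputable def blkOp {X Y : Type*}
    [NormedAddCommGroup X] [NormedSpace ℂ X]
    [NormedAddCommGroup Y] [NormedSpace ℂ Y]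
    (A : X →L[ℂ] X) (B : Y →L[ℂ] X) (C : X →L[ℂ] Y) (D : Y →L[ℂ] Y) :
    (X × Y) →L[ℂ] (X × Y) :=
  ((A ∘L ContinuousLinearMap.fst ℂ X Y) + (B ∘L ContinuousLinearMap.snd ℂ X Y)).prod
    ((C ∘L ContinuousLinearMap.fst ℂ X Y) + (D ∘L ContinuousLinearMap.snd ℂ X Y))

lemma blkOp_mul {X Y : Type*}
    [NormedAddCommGroup X] [NormedSpace ℂ X]
    [NormedAddCommGroup Y] [NormedSpace ℂ Y]
    (A A' : X →L[ℂ] X) (B B' : Y →L[ℂ] X) (C C' : X →L[ℂ] Y) (D D' : Y →L[ℂ] Y) :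
    blkOp A B C D * blkOp A' B' C' D' =
      blkOp (A ∘L A' + B ∘L C') (A ∘L B' + B ∘L D')
        (C ∘L A' + D ∘L C') (C ∘L B' + D ∘L D') := by
  refine ContinuousLinearMap.ext fun v => Prod.ext ?_ ?_ <;>
    · simp only [blkOp, ContinuousLinearMap.mul_apply, ContinuousLinearMap.prod_apply,
        ContinuousLinearMap.add_apply, ContinuousLinearMap.comp_apply,
        ContinuousLinearMap.coe_fst', ContinuousLinearMap.coe_snd', map_add]
      abel

theorem stmt_18 {X Y : Type*}
    [NormedAddCommGroup X] [NormedSpace ℂ X] [CompleteSpace X]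
    [NormedAddCommGroup Y] [NormedSpace ℂ Y] [CompleteSpace Y]
    (A As : X →L[ℂ] X) (B : Y →L[ℂ] X) (C : X →L[ℂ] Y) (D Ds : Y →L[ℂ] Y)
    (hA : IsGroupInv A As) (hD : IsGroupInv D Ds)
    (h1 : C ∘L (1 - A * As) = 0)
    (h2 : B ∘L (1 - D * Ds) = 0)
    (h3 : (1 - A * As) * (B ∘L C) = 0)
    (h4 : (B ∘L C) ∘L A = 0)
    (h5 : D ∘L C = (C ∘L (As ∘L B)) ∘L C) :
    ∃ W, IsGroupInv
        (((A ∘L ContinuousLinearMap.fst ℂ X Y) + (B ∘L ContinuousLinearMap.snd ℂ X Y)).prod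
          ((C ∘L ContinuousLinearMap.fst ℂ X Y) + (D ∘L ContinuousLinearMap.snd ℂ X Y))) W := by
  obtain ⟨hA1, hA2, hA3⟩ := hA
  obtain ⟨hD1, hD2, hD3⟩ := hD
  have psa : ∀ x, As (A x) = A (As x) := by
    intro x
    have h := congrArg (fun T => T x) hA2
    simpa [ContinuousLinearMap.mul_apply] using h.symm
  have pasaas : ∀ x, As (A (As x)) = As x := by
    intro x
    have h := congrArg (fun T => T x) hA1
    simpa [ContinuousLinearMap.mul_apply] using h
  have pasa : ∀ x, A (As (A x)) = A x := by
    intro x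
    have h := congrArg (fun T => T x) hA3
    simpa [ContinuousLinearMap.mul_apply] using h
  have paas : ∀ x, A (A (As x)) = A x := by
    intro x
    rw [← psa x]
    exact pasa x
  have pass : ∀ x, A (As (As x)) = As x := by
    intro x
    rw [← psa (As x)]
    exact pasaas x
  have ptd : ∀ y, Ds (D y) = D (Ds y) := by
    intro y
    have h := congrArg (fun T => T y) hD2
    simpa [ContinuousLinearMap.mul_apply] using h.symm
  have ptdt : ∀ y, Ds (D (Ds y)) = Ds y := by
    intro y
    have h := congrArg (fun T => T y) hD1
    simpa [ContinuousLinearMap.mul_apply] using h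
  have pdtd : ∀ y, D (Ds (D y)) = D y := by
    intro y
    have h := congrArg (fun T => T y) hD3
    simpa [ContinuousLinearMap.mul_apply] using h
  have pddt : ∀ y, D (D (Ds y)) = D y := by
    intro y
    rw [← ptd y]
    exact pdtd y
  have pdtt : ∀ y, D (Ds (Ds y)) = Ds y := by
    intro y
    rw [← ptd (Ds y)]
    exact ptdt y
  have pcas : ∀ x, C (A (As x)) = C x := by
    intro x
    have h := congrArg (fun T => T x) h1
    simp only [ContinuousLinearMap.comp_apply, ContinuousLinearMap.sub_apply,
      ContinuousLinearMap.mul_apply, ContinuousLinearMap.one_apply, map_sub,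
      ContinuousLinearMap.zero_apply] at h
    exact (sub_eq_zero.mp h).symm
  have pbdt : ∀ y, B (D (Ds y)) = B y := by
    intro y
    have h := congrArg (fun T => T y) h2
    simp only [ContinuousLinearMap.comp_apply, ContinuousLinearMap.sub_apply,
      ContinuousLinearMap.mul_apply, ContinuousLinearMap.one_apply, map_sub,
      ContinuousLinearMap.zero_apply] at h
    exact (sub_eq_zero.mp h).symm
  have pbc : ∀ x, B (C x) = 0 := by
    intro x
    have h := congrArg (fun T => T (As x)) h4
    simp only [ContinuousLinearMap.comp_apply, ContinuousLinearMap.zero_apply] at h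
    rw [pcas x] at h
    exact h
  have pdc : ∀ x, D (C x) = 0 := by
    intro x
    have h := congrArg (fun T => T x) h5
    simp only [ContinuousLinearMap.comp_apply] at h
    rw [h, pbc x, map_zero, map_zero]
  have ptc : ∀ x, Ds (C x) = 0 := by
    intro x
    have h : Ds (Ds (D (C x))) = Ds (C x) := by
      rw [ptd (C x)]
      exact ptdt (C x)
    rw [← h, pdc x, map_zero, map_zero]
  have gMW1 : A ∘L As + B ∘L (C ∘L (As ∘L As)) = (A ∘L As) := by
    ext y
    simp only [ContinuousLinearMap.comp_apply, ContinuousLinearMap.add_apply,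
      ContinuousLinearMap.sub_apply, ContinuousLinearMap.coe_sub', Pi.sub_apply,
      map_add, map_sub, map_zero, add_zero, zero_add, sub_zero,
      psa, paas, pass, ptd, pddt, pdtt, pcas, pbdt, pbc, pdc, ptc]
    try abel
  have gMW2 : A ∘L (B ∘L (Ds ∘L Ds) - A ∘L (As ∘L (B ∘L (Ds ∘L Ds))) - As ∘L (B ∘L Ds)) + B ∘L (Ds - C ∘L (As ∘L (B ∘L (Ds ∘L Ds))) - C ∘L (As ∘L (As ∘L (B ∘L Ds)))) = (B ∘L Ds - A ∘L (As ∘L (B ∘L Ds))) := by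
    ext y
    simp only [ContinuousLinearMap.comp_apply, ContinuousLinearMap.add_apply,
      ContinuousLinearMap.sub_apply, ContinuousLinearMap.coe_sub', Pi.sub_apply,
      map_add, map_sub, map_zero, add_zero, zero_add, sub_zero,
      psa, paas, pass, ptd, pddt, pdtt, pcas, pbdt, pbc, pdc, ptc]
    try abel
  have gMW3 : C ∘L As + D ∘L (C ∘L (As ∘L As)) = (C ∘L As) := by
    ext y
    simp only [ContinuousLinearMap.comp_apply, ContinuousLinearMap.add_apply,
      ContinuousLinearMap.sub_apply, ContinuousLinearMap.coe_sub', Pi.sub_apply,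
      map_add, map_sub, map_zero, add_zero, zero_add, sub_zero,
      psa, paas, pass, ptd, pddt, pdtt, pcas, pbdt, pbc, pdc, ptc]
    try abel
  have gMW4 : C ∘L (B ∘L (Ds ∘L Ds) - A ∘L (As ∘L (B ∘L (Ds ∘L Ds))) - As ∘L (B ∘L Ds)) + D ∘L (Ds - C ∘L (As ∘L (B ∘L (Ds ∘L Ds))) - C ∘L (As ∘L (As ∘L (B ∘L Ds)))) = (D ∘L Ds - C ∘L (As ∘L (B ∘L Ds))) := by
    ext y
    simp only [ContinuousLinearMap.comp_apply, ContinuousLinearMap.add_apply,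
      ContinuousLinearMap.sub_apply, ContinuousLinearMap.coe_sub', Pi.sub_apply,
      map_add, map_sub, map_zero, add_zero, zero_add, sub_zero,
      psa, paas, pass, ptd, pddt, pdtt, pcas, pbdt, pbc, pdc, ptc]
    try abel
  have gWM1 : As ∘L A + (B ∘L (Ds ∘L Ds) - A ∘L (As ∘L (B ∘L (Ds ∘L Ds))) - As ∘L (B ∘L Ds)) ∘L C = (A ∘L As) := by
    ext y
    simp only [ContinuousLinearMap.comp_apply, ContinuousLinearMap.add_apply,
      ContinuousLinearMap.sub_apply, ContinuousLinearMap.coe_sub', Pi.sub_apply,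
      map_add, map_sub, map_zero, add_zero, zero_add, sub_zero,
      psa, paas, pass, ptd, pddt, pdtt, pcas, pbdt, pbc, pdc, ptc]
    try abel
  have gWM2 : As ∘L B + (B ∘L (Ds ∘L Ds) - A ∘L (As ∘L (B ∘L (Ds ∘L Ds))) - As ∘L (B ∘L Ds)) ∘L D = (B ∘L Ds - A ∘L (As ∘L (B ∘L Ds))) := by
    ext y
    simp only [ContinuousLinearMap.comp_apply, ContinuousLinearMap.add_apply,
      ContinuousLinearMap.sub_apply, ContinuousLinearMap.coe_sub', Pi.sub_apply,
      map_add, map_sub, map_zero, add_zero, zero_add, sub_zero,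
      psa, paas, pass, ptd, pddt, pdtt, pcas, pbdt, pbc, pdc, ptc]
    try abel
  have gWM3 : (C ∘L (As ∘L As)) ∘L A + (Ds - C ∘L (As ∘L (B ∘L (Ds ∘L Ds))) - C ∘L (As ∘L (As ∘L (B ∘L Ds)))) ∘L C = (C ∘L As) := by
    ext y
    simp only [ContinuousLinearMap.comp_apply, ContinuousLinearMap.add_apply,
      ContinuousLinearMap.sub_apply, ContinuousLinearMap.coe_sub', Pi.sub_apply,
      map_add, map_sub, map_zero, add_zero, zero_add, sub_zero,
      psa, paas, pass, ptd, pddt, pdtt, pcas, pbdt, pbc, pdc, ptc]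
    try abel
  have gWM4 : (C ∘L (As ∘L As)) ∘L B + (Ds - C ∘L (As ∘L (B ∘L (Ds ∘L Ds))) - C ∘L (As ∘L (As ∘L (B ∘L Ds)))) ∘L D = (D ∘L Ds - C ∘L (As ∘L (B ∘L Ds))) := by
    ext y
    simp only [ContinuousLinearMap.comp_apply, ContinuousLinearMap.add_apply,
      ContinuousLinearMap.sub_apply, ContinuousLinearMap.coe_sub', Pi.sub_apply,
      map_add, map_sub, map_zero, add_zero, zero_add, sub_zero,
      psa, paas, pass, ptd, pddt, pdtt, pcas, pbdt, pbc, pdc, ptc]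
    try abel
  have gEM1 : (A ∘L As) ∘L A + (B ∘L Ds - A ∘L (As ∘L (B ∘L Ds))) ∘L C = A := by
    ext y
    simp only [ContinuousLinearMap.comp_apply, ContinuousLinearMap.add_apply,
      ContinuousLinearMap.sub_apply, ContinuousLinearMap.coe_sub', Pi.sub_apply,
      map_add, map_sub, map_zero, add_zero, zero_add, sub_zero,
      psa, paas, pass, ptd, pddt, pdtt, pcas, pbdt, pbc, pdc, ptc]
    try abel
  have gEM2 : (A ∘L As) ∘L B + (B ∘L Ds - A ∘L (As ∘L (B ∘L Ds))) ∘L D = B := by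
    ext y
    simp only [ContinuousLinearMap.comp_apply, ContinuousLinearMap.add_apply,
      ContinuousLinearMap.sub_apply, ContinuousLinearMap.coe_sub', Pi.sub_apply,
      map_add, map_sub, map_zero, add_zero, zero_add, sub_zero,
      psa, paas, pass, ptd, pddt, pdtt, pcas, pbdt, pbc, pdc, ptc]
    try abel
  have gEM3 : (C ∘L As) ∘L A + (D ∘L Ds - C ∘L (As ∘L (B ∘L Ds))) ∘L C = C := by
    ext y
    simp only [ContinuousLinearMap.comp_apply, ContinuousLinearMap.add_apply,
      ContinuousLinearMap.sub_apply, ContinuousLinearMap.coe_sub', Pi.sub_apply,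
      map_add, map_sub, map_zero, add_zero, zero_add, sub_zero,
      psa, paas, pass, ptd, pddt, pdtt, pcas, pbdt, pbc, pdc, ptc]
    try abel
  have gEM4 : (C ∘L As) ∘L B + (D ∘L Ds - C ∘L (As ∘L (B ∘L Ds))) ∘L D = D := by
    ext y
    simp only [ContinuousLinearMap.comp_apply, ContinuousLinearMap.add_apply,
      ContinuousLinearMap.sub_apply, ContinuousLinearMap.coe_sub', Pi.sub_apply,
      map_add, map_sub, map_zero, add_zero, zero_add, sub_zero,
      psa, paas, pass, ptd, pddt, pdtt, pcas, pbdt, pbc, pdc, ptc]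
    try abel
  have gEW1 : (A ∘L As) ∘L As + (B ∘L Ds - A ∘L (As ∘L (B ∘L Ds))) ∘L (C ∘L (As ∘L As)) = As := by
    ext y
    simp only [ContinuousLinearMap.comp_apply, ContinuousLinearMap.add_apply,
      ContinuousLinearMap.sub_apply, ContinuousLinearMap.coe_sub', Pi.sub_apply,
      map_add, map_sub, map_zero, add_zero, zero_add, sub_zero,
      psa, paas, pass, ptd, pddt, pdtt, pcas, pbdt, pbc, pdc, ptc]
    try abel
  have gEW2 : (A ∘L As) ∘L (B ∘L (Ds ∘L Ds) - A ∘L (As ∘L (B ∘L (Ds ∘L Ds))) - As ∘L (B ∘L Ds)) + (B ∘L Ds - A ∘L (As ∘L (B ∘L Ds))) ∘L (Ds - C ∘L (As ∘L (B ∘L (Ds ∘L Ds))) - C ∘L (As ∘L (As ∘L (B ∘L Ds)))) = (B ∘L (Ds ∘L Ds) - A ∘L (As ∘L (B ∘L (Ds ∘L Ds))) - As ∘L (B ∘L Ds)) := by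
    ext y
    simp only [ContinuousLinearMap.comp_apply, ContinuousLinearMap.add_apply,
      ContinuousLinearMap.sub_apply, ContinuousLinearMap.coe_sub', Pi.sub_apply,
      map_add, map_sub, map_zero, add_zero, zero_add, sub_zero,
      psa, paas, pass, ptd, pddt, pdtt, pcas, pbdt, pbc, pdc, ptc]
    try abel
  have gEW3 : (C ∘L As) ∘L As + (D ∘L Ds - C ∘L (As ∘L (B ∘L Ds))) ∘L (C ∘L (As ∘L As)) = (C ∘L (As ∘L As)) := by
    ext y
    simp only [ContinuousLinearMap.comp_apply, ContinuousLinearMap.add_apply,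
      ContinuousLinearMap.sub_apply, ContinuousLinearMap.coe_sub', Pi.sub_apply,
      map_add, map_sub, map_zero, add_zero, zero_add, sub_zero,
      psa, paas, pass, ptd, pddt, pdtt, pcas, pbdt, pbc, pdc, ptc]
    try abel
  have gEW4 : (C ∘L As) ∘L (B ∘L (Ds ∘L Ds) - A ∘L (As ∘L (B ∘L (Ds ∘L Ds))) - As ∘L (B ∘L Ds)) + (D ∘L Ds - C ∘L (As ∘L (B ∘L Ds))) ∘L (Ds - C ∘L (As ∘L (B ∘L (Ds ∘L Ds))) - C ∘L (As ∘L (As ∘L (B ∘L Ds)))) = (Ds - C ∘L (As ∘L (B ∘L (Ds ∘L Ds))) - C ∘L (As ∘L (As ∘L (B ∘L Ds)))) := by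
    ext y
    simp only [ContinuousLinearMap.comp_apply, ContinuousLinearMap.add_apply,
      ContinuousLinearMap.sub_apply, ContinuousLinearMap.coe_sub', Pi.sub_apply,
      map_add, map_sub, map_zero, add_zero, zero_add, sub_zero,
      psa, paas, pass, ptd, pddt, pdtt, pcas, pbdt, pbc, pdc, ptc]
    try abel
  have hM : (((A ∘L ContinuousLinearMap.fst ℂ X Y) + (B ∘L ContinuousLinearMap.snd ℂ X Y)).prod
      ((C ∘L ContinuousLinearMap.fst ℂ X Y) + (D ∘L ContinuousLinearMap.snd ℂ X Y))) =
      blkOp A B C D := rfl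
  rw [hM]
  refine ⟨blkOp As (B ∘L (Ds ∘L Ds) - A ∘L (As ∘L (B ∘L (Ds ∘L Ds))) - As ∘L (B ∘L Ds)) (C ∘L (As ∘L As)) (Ds - C ∘L (As ∘L (B ∘L (Ds ∘L Ds))) - C ∘L (As ∘L (As ∘L (B ∘L Ds)))), ?_, ?_, ?_⟩
  · -- W * M * W = W
    rw [blkOp_mul, gWM1, gWM2, gWM3, gWM4, blkOp_mul, gEW1, gEW2, gEW3, gEW4]
  · -- M * W = W * M
    rw [blkOp_mul, gMW1, gMW2, gMW3, gMW4, blkOp_mul, gWM1, gWM2, gWM3, gWM4]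
  · -- M * W * M = M
    rw [blkOp_mul, gMW1, gMW2, gMW3, gMW4, blkOp_mul, gEM1, gEM2, gEM3, gEM4]
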